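/- For every natural number b ≥ 1 and every real x, the polynomial identity 1 − (1 − x²)^b = 4 Σ_{j=0}^{b−1} (−1)^j [2^{−2b} Σ_{i=j+1}^{b} C(2b, b+i)] · x · T_{2j+1}(x) holds, where T_m denotes the m-th Chebyshev polynomial of the first kind and C(·, ·) denotes the binomial coefficient. -/

import Mathlib

open Polynomial Finset

private lemma T_step (x : ℝ) (m : ℤ) :
    (4 - 4*x^2) * (Chebyshev.T ℝ m).eval x =
      2*(Chebyshev.T ℝ m).eval x - (Chebyshev.T ℝ (m+2)).eval x - (Chebyshev.T ℝ (m-2)).eval x := by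
  have h := congrArg (eval x) (Chebyshev.T_mul_T ℝ m 2)
  simp only [eval_mul, eval_add, eval_ofNat, Chebyshev.T_two, eval_sub, eval_pow, eval_one,
    eval_X, eval_mul] at h
  linear_combination -h

private lemma cheb_key (x : ℝ) : ∀ b : ℕ,
    ∑ k ∈ range (2*b+1), (-1:ℝ)^(b+k) * ((2*b).choose k : ℝ) *
      (Chebyshev.T ℝ (2*(k:ℤ) - 2*(b:ℤ))).eval x = (4 - 4*x^2)^b := by
  intro b
  induction b with
  | zero => simp [Chebyshev.T_zero]
  | succ b ih =>
      set S : ℕ → ℝ := fun k => (Chebyshev.T ℝ (2*(k:ℤ) - 2*(b:ℤ) - 2)).eval x with hS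
      set A : ℕ → ℝ := fun k => (-1:ℝ)^(b+k) * ((2*b).choose k : ℝ) with hA
      set g : ℕ → ℝ := fun k => (-1:ℝ)^(b+1+k) * ((2*b+2).choose k : ℝ) * S k with hg
      have hgoal : ∑ k ∈ range (2*b+3), g k = (4 - 4*x^2)^(b+1) → ∑ k ∈ range (2*(b+1)+1),
          (-1:ℝ)^(b+1+k) * ((2*(b+1)).choose k : ℝ) *
          (Chebyshev.T ℝ (2*(k:ℤ) - 2*((b+1:ℕ):ℤ))).eval x = (4 - 4*x^2)^(b+1) := by
        intro h
        rw [← h, show 2*(b+1)+1 = 2*b+3 by ring]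
        refine Finset.sum_congr rfl fun k _ => ?_
        simp only [hg, hS, show 2*(k:ℤ) - 2*((b+1:ℕ):ℤ) = 2*(k:ℤ) - 2*(b:ℤ) - 2 by push_cast; ring,
          show 2*(b+1) = 2*b+2 by ring]
      apply hgoal
      have h1 : ∑ k ∈ range (2*b+3), g k = (∑ k ∈ range (2*b+1), g (k+2)) + g 1 + g 0 := by
        rw [show 2*b+3 = (2*b+1)+1+1 by ring, Finset.sum_range_succ', Finset.sum_range_succ']
      have ih' : ∑ k ∈ range (2*b+1), A k * S (k+1) = (4 - 4*x^2)^b := by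
        rw [← ih]
        refine Finset.sum_congr rfl fun k _ => ?_
        simp only [hA, hS, show 2*((k+1:ℕ):ℤ) - 2*(b:ℤ) - 2 = 2*(k:ℤ) - 2*(b:ℤ) by push_cast; ring]
      have h2 : ∀ k ∈ range (2*b+1), g (k+2) = (2*A (k+1) - A k - A (k+2)) * S (k+2) := by
        intro k _
        have hc : ((2*b+2).choose (k+2) : ℝ)
            = (2*b).choose k + 2*(2*b).choose (k+1) + (2*b).choose (k+2) := by
          rw [show 2*b+2 = (2*b+1)+1 by ring]
          rw [Nat.choose_succ_succ (2*b+1) (k+1), Nat.choose_succ_succ (2*b) k,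
            Nat.choose_succ_succ (2*b) (k+1)]
          push_cast; ring
        simp only [hg, hA, hc]
        ring
      have h3 : (4 - 4*x^2) * ∑ k ∈ range (2*b+1), A k * S (k+1)
          = ∑ k ∈ range (2*b+1), (2*(A k * S (k+1)) - A k * S (k+2) - A k * S k) := by
        rw [Finset.mul_sum]
        refine Finset.sum_congr rfl fun k _ => ?_
        have hs := T_step x (2*((k+1:ℕ):ℤ) - 2*(b:ℤ) - 2)
        have e1 : (2*((k+1:ℕ):ℤ) - 2*(b:ℤ) - 2) + 2 = 2*((k+2:ℕ):ℤ) - 2*(b:ℤ) - 2 := by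
          push_cast; ring
        have e2 : (2*((k+1:ℕ):ℤ) - 2*(b:ℤ) - 2) - 2 = 2*((k:ℕ):ℤ) - 2*(b:ℤ) - 2 := by
          push_cast; ring
        rw [e1, e2] at hs
        simp only [hS]
        linear_combination A k * hs
      set F : ℕ → ℝ := fun k => 2 * A k * S (k+1) with hF
      set φ : ℕ → ℝ := fun k => A k * S k with hφ
      have t1 : ∑ k ∈ range (2*b+1), (F (k+1) - F k) = F (2*b+1) - F 0 :=
        Finset.sum_range_sub F (2*b+1)
      have t2 : ∑ k ∈ range (2*b+1), (φ (k+2) - φ (k+1)) = φ (2*b+2) - φ 1 :=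
        Finset.sum_range_sub (fun k => φ (k+1)) (2*b+1)
      have t3 : ∑ k ∈ range (2*b+1), (φ (k+1) - φ k) = φ (2*b+1) - φ 0 :=
        Finset.sum_range_sub φ (2*b+1)
      have hd : ∑ k ∈ range (2*b+1), ((2*A (k+1) - A k - A (k+2)) * S (k+2))
          = (∑ k ∈ range (2*b+1), (2*(A k * S (k+1)) - A k * S (k+2) - A k * S k))
            + ((F (2*b+1) - F 0) - (φ (2*b+2) - φ 1) - (φ (2*b+1) - φ 0)) := by
        rw [← t1, ← t2, ← t3, ← Finset.sum_sub_distrib, ← Finset.sum_sub_distrib,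
          ← Finset.sum_add_distrib]
        refine Finset.sum_congr rfl fun k _ => ?_
        simp only [hF, hφ]
        ring
      have hA1 : A (2*b+1) = 0 := by
        simp [hA, Nat.choose_eq_zero_of_lt (by omega : 2*b < 2*b+1)]
      have hA2 : A (2*b+2) = 0 := by
        simp [hA, Nat.choose_eq_zero_of_lt (by omega : 2*b < 2*b+2)]
      have hFn : F (2*b+1) = 0 := by simp [hF, hA1]
      have hφ1 : φ (2*b+2) = 0 := by simp [hφ, hA2]
      have hφ2 : φ (2*b+1) = 0 := by simp [hφ, hA1]
      have hg0 : g 0 = (-1:ℝ)^(b+1) * S 0 := by simp [hg]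
      have hg1 : g 1 = (-1:ℝ)^(b+1) * (-1) * (2*b+2) * S 1 := by
        simp only [hg, Nat.choose_one_right]
        push_cast; ring
      have hA0 : A 0 = (-1:ℝ)^b := by simp [hA]
      have hA1' : A 1 = (-1:ℝ)^b * (-1) * (2*b) := by
        simp only [hA, Nat.choose_one_right]
        push_cast; ring
      have hF0 : F 0 = 2 * (-1:ℝ)^b * S 1 := by show 2 * A 0 * S 1 = _; rw [hA0]; try ring
      have hφ01 : φ 1 = (-1:ℝ)^b * (-1) * (2*b) * S 1 := by
        show A 1 * S 1 = _; rw [hA1']; try ring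
      have hφ00 : φ 0 = (-1:ℝ)^b * S 0 := by show A 0 * S 0 = _; rw [hA0]; try ring
      rw [h1, Finset.sum_congr rfl h2, hd, ← h3, ih', hF0, hφ01, hφ00, hFn, hφ1, hφ2, hg0, hg1,
        pow_succ]
      ring

private lemma natF1 (b : ℕ) :
    4^b = 2 * (∑ i ∈ Icc 1 b, (2*b).choose (b+i)) + (2*b).choose b := by
  have h0 : ∑ k ∈ range (2*b+1), (2*b).choose k = 4^b := by
    rw [Nat.sum_range_choose (2*b), pow_mul]; norm_num
  have h1 : ∑ k ∈ Finset.Ico 0 (b+1), (2*b).choose k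
      + ∑ k ∈ Finset.Ico (b+1) (2*b+1), (2*b).choose k
      = ∑ k ∈ Finset.Ico 0 (2*b+1), (2*b).choose k :=
    Finset.sum_Ico_consecutive _ (by omega) (by omega)
  have h2 : ∑ k ∈ Finset.Ico (b+1) (2*b+1), (2*b).choose k
      = ∑ i ∈ range b, (2*b).choose (b+1+i) := by
    rw [Finset.sum_Ico_eq_sum_range, show 2*b+1-(b+1) = b by omega]
  have h3 : ∑ k ∈ range b, (2*b).choose k = ∑ i ∈ range b, (2*b).choose (b+1+i) := by
    rw [← Finset.sum_range_reflect]
    refine Finset.sum_congr rfl fun i hi => ?_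
    rw [Finset.mem_range] at hi
    rw [show b - 1 - i = 2*b - (b+1+i) by omega, Nat.choose_symm (by omega)]
  have h4 : ∑ i ∈ Icc 1 b, (2*b).choose (b+i) = ∑ i ∈ range b, (2*b).choose (b+1+i) := by
    rw [← Finset.Ico_add_one_right_eq_Icc, Finset.sum_Ico_eq_sum_range, show b+1-1 = b by omega]
    exact Finset.sum_congr rfl fun i _ => by rw [show b+(1+i) = b+1+i by ring]
  rw [← Finset.range_eq_Ico, ← Finset.range_eq_Ico] at h1
  rw [Finset.sum_range_succ] at h1
  omega

private noncomputable def tt (x : ℝ) (j : ℕ) : ℝ := (Chebyshev.T ℝ (2*(j:ℤ))).eval x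

private lemma tt_zero (x : ℝ) : tt x 0 = 1 := by
  show (Chebyshev.T ℝ (2*((0:ℕ):ℤ))).eval x = 1
  norm_num [Chebyshev.T_zero]

private lemma step1 (x : ℝ) (j : ℕ) :
    x * (Chebyshev.T ℝ (2*(j:ℤ)+1)).eval x = (tt x (j+1) + tt x j) / 2 := by
  have h := congrArg (eval x) (Chebyshev.T_mul_T ℝ (2*(j:ℤ)+1) 1)
  simp only [eval_mul, eval_add, eval_ofNat, Chebyshev.T_one, eval_X] at h
  have e1 : (2*(j:ℤ)+1)+1 = 2*((j+1:ℕ):ℤ) := by push_cast; ring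
  have e2 : (2*(j:ℤ)+1)-1 = 2*((j:ℕ):ℤ) := by ring
  rw [e1, e2] at h
  show _ = ((Chebyshev.T ℝ (2*((j+1:ℕ):ℤ))).eval x + (Chebyshev.T ℝ (2*((j:ℕ):ℤ))).eval x) / 2
  linarith

private lemma step2 (x : ℝ) (i : ℕ) :
    ∑ j ∈ range i, (-1:ℝ)^j * (tt x (j+1) + tt x j) = tt x 0 - (-1)^i * tt x i := by
  have h := Finset.sum_range_sub' (fun j => (-1:ℝ)^j * tt x j) i
  simp only [pow_zero, one_mul] at h
  rw [← h]
  exact Finset.sum_congr rfl fun j _ => by ring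

private lemma F2 (x : ℝ) (b : ℕ) :
    (4 - 4*x^2)^b = ((2*b).choose b : ℝ)
      + 2 * ∑ i ∈ range b, (-1:ℝ)^(i+1) * ((2*b).choose (b+1+i) : ℝ) * tt x (i+1) := by
  rw [← cheb_key x b]
  have h1 : ∑ k ∈ Finset.Ico 0 (b+1), ((-1:ℝ)^(b+k) * ((2*b).choose k : ℝ) *
        (Chebyshev.T ℝ (2*(k:ℤ) - 2*(b:ℤ))).eval x)
      + ∑ k ∈ Finset.Ico (b+1) (2*b+1), ((-1:ℝ)^(b+k) * ((2*b).choose k : ℝ) *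
        (Chebyshev.T ℝ (2*(k:ℤ) - 2*(b:ℤ))).eval x)
      = ∑ k ∈ Finset.Ico 0 (2*b+1), ((-1:ℝ)^(b+k) * ((2*b).choose k : ℝ) *
        (Chebyshev.T ℝ (2*(k:ℤ) - 2*(b:ℤ))).eval x) :=
    Finset.sum_Ico_consecutive _ (by omega) (by omega)
  rw [← Finset.range_eq_Ico, ← Finset.range_eq_Ico] at h1
  rw [← h1, Finset.sum_range_succ]
  have hb : (-1:ℝ)^(b+b) * ((2*b).choose b : ℝ) * (Chebyshev.T ℝ (2*(b:ℤ) - 2*(b:ℤ))).eval x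
      = ((2*b).choose b : ℝ) := by
    rw [show b+b = 2*b by ring, pow_mul, show 2*(b:ℤ) - 2*(b:ℤ) = 0 by ring]
    norm_num [Chebyshev.T_zero]
  have hup : ∑ k ∈ Finset.Ico (b+1) (2*b+1), ((-1:ℝ)^(b+k) * ((2*b).choose k : ℝ) *
        (Chebyshev.T ℝ (2*(k:ℤ) - 2*(b:ℤ))).eval x)
      = ∑ i ∈ range b, (-1:ℝ)^(i+1) * ((2*b).choose (b+1+i) : ℝ) * tt x (i+1) := by
    rw [Finset.sum_Ico_eq_sum_range, show 2*b+1-(b+1) = b by omega]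
    refine Finset.sum_congr rfl fun i _ => ?_
    have e1 : 2*(((b+1+i:ℕ)):ℤ) - 2*(b:ℤ) = 2*((i+1:ℕ):ℤ) := by push_cast; ring
    have e2 : ((-1:ℝ))^(b+(b+1+i)) = (-1)^(i+1) := by
      rw [show b+(b+1+i) = 2*b+(i+1) by ring, pow_add, pow_mul]
      norm_num
    rw [e1, e2]
    rfl
  have hlo : ∑ k ∈ range b, ((-1:ℝ)^(b+k) * ((2*b).choose k : ℝ) *
        (Chebyshev.T ℝ (2*(k:ℤ) - 2*(b:ℤ))).eval x)
      = ∑ i ∈ range b, (-1:ℝ)^(i+1) * ((2*b).choose (b+1+i) : ℝ) * tt x (i+1) := by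
    rw [← Finset.sum_range_reflect]
    refine Finset.sum_congr rfl fun i hi => ?_
    rw [Finset.mem_range] at hi
    have ec : (2*b).choose (b-1-i) = (2*b).choose (b+1+i) := by
      rw [show b - 1 - i = 2*b - (b+1+i) by omega, Nat.choose_symm (by omega)]
    have ecast : (((b-1-i:ℕ)):ℤ) = (b:ℤ)-1-(i:ℤ) := by omega
    have eT : 2*(((b-1-i:ℕ)):ℤ) - 2*(b:ℤ) = -(2*((i+1:ℕ):ℤ)) := by
      rw [ecast]; push_cast; ring
    have h2 : ((-1:ℝ))^(i+1) * (-1)^(i+1) = 1 := by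
      rw [← pow_add, show (i+1)+(i+1) = 2*(i+1) by ring, pow_mul]; norm_num
    have hpar : ((-1:ℝ))^(b+(b-1-i)) = (-1)^(i+1) := by
      rw [show b+(b-1-i) = 2*b - (i+1) by omega]
      have h3 : ((-1:ℝ))^(2*b-(i+1)) * (-1)^(i+1) = 1 := by
        rw [← pow_add, show 2*b-(i+1)+(i+1) = 2*b by omega, pow_mul]; norm_num
      calc ((-1:ℝ))^(2*b-(i+1)) = ((-1:ℝ))^(2*b-(i+1)) * ((-1)^(i+1) * (-1)^(i+1)) := by
            rw [h2, mul_one]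
        _ = (((-1:ℝ))^(2*b-(i+1)) * (-1)^(i+1)) * (-1)^(i+1) := by ring
        _ = (-1)^(i+1) := by rw [h3, one_mul]
    rw [ec, eT, Chebyshev.T_neg, hpar]
    rfl
  rw [hb, hup, hlo]
  ring

/-- Chebyshev expansion identity: for `b ≥ 1` and all real `x`,
`1 - (1 - x²)^b = 4 Σ_{j=0}^{b-1} (-1)^j [2^{-2b} Σ_{i=j+1}^{b} C(2b, b+i)] · x · T_{2j+1}(x)`,
where `T_m` is the `m`-th Chebyshev polynomial of the first kind. -/
theorem one_sub_pow_eq_chebyshev_sum (b : ℕ) (hb : 1 ≤ b) (x : ℝ) :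
    1 - (1 - x ^ 2) ^ b =
      4 * ∑ j ∈ Finset.range b, (-1 : ℝ) ^ j *
        ((2 : ℝ) ^ (-(2 * (b : ℤ))) * ∑ i ∈ Finset.Icc (j + 1) b, ((2 * b).choose (b + i) : ℝ)) *
        (x * (Polynomial.Chebyshev.T ℝ (2 * (j : ℤ) + 1)).eval x) := by
  symm
  set K : ℝ := (2 : ℝ) ^ (-(2 * (b : ℤ))) with hKdef
  have hK : K = ((4:ℝ)^b)⁻¹ := by
    rw [hKdef, zpow_neg]
    congr 1
    rw [show (2*(b:ℤ)) = ((2*b:ℕ):ℤ) by push_cast; ring, zpow_natCast, pow_mul]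
    norm_num
  have hc1 : (∑ i ∈ Icc 1 b, ((2*b).choose (b+i):ℝ)) = ((4:ℝ)^b - ((2*b).choose b : ℝ))/2 := by
    have h := natF1 b
    have h' : ((4^b : ℕ):ℝ)
        = ((2 * (∑ i ∈ Icc 1 b, (2*b).choose (b+i)) + (2*b).choose b : ℕ) : ℝ) := by
      exact_mod_cast congrArg (fun n : ℕ => (n:ℝ)) h
    push_cast at h'
    linarith
  calc 4 * ∑ j ∈ Finset.range b, (-1 : ℝ) ^ j *
        (K * ∑ i ∈ Finset.Icc (j + 1) b, ((2 * b).choose (b + i) : ℝ)) *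
        (x * (Polynomial.Chebyshev.T ℝ (2 * (j : ℤ) + 1)).eval x)
      = 2*K * ∑ j ∈ range b, ∑ i ∈ Icc (j+1) b,
          ((2*b).choose (b+i) : ℝ) * ((-1:ℝ)^j * (tt x (j+1) + tt x j)) := by
        rw [Finset.mul_sum, Finset.mul_sum]
        refine Finset.sum_congr rfl fun j _ => ?_
        rw [step1, ← Finset.sum_mul]
        ring
    _ = 2*K * ∑ i ∈ Icc 1 b, ∑ j ∈ range i,
          ((2*b).choose (b+i) : ℝ) * ((-1:ℝ)^j * (tt x (j+1) + tt x j)) := by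
        congr 1
        refine Finset.sum_comm' ?_
        intro j i
        simp only [Finset.mem_range, Finset.mem_Icc]
        omega
    _ = 2*K * ∑ i ∈ Icc 1 b, ((2*b).choose (b+i) : ℝ) * (1 - (-1:ℝ)^i * tt x i) := by
        congr 1
        refine Finset.sum_congr rfl fun i _ => ?_
        rw [← Finset.mul_sum, step2, tt_zero]
    _ = 2*K * ((∑ i ∈ Icc 1 b, ((2*b).choose (b+i):ℝ))
          - ∑ i ∈ range b, (-1:ℝ)^(i+1) * ((2*b).choose (b+1+i) : ℝ) * tt x (i+1)) := by
        have hconv : ∑ i ∈ Icc 1 b, ((2*b).choose (b+i):ℝ) * ((-1:ℝ)^i * tt x i)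
            = ∑ i ∈ range b, (-1:ℝ)^(i+1) * ((2*b).choose (b+1+i) : ℝ) * tt x (i+1) := by
          rw [← Finset.Ico_add_one_right_eq_Icc, Finset.sum_Ico_eq_sum_range, show b+1-1 = b by omega]
          refine Finset.sum_congr rfl fun i _ => ?_
          rw [show b+(1+i) = b+1+i by ring, show 1+i = i+1 by ring]
          ring
        rw [← hconv, ← Finset.sum_sub_distrib]
        congr 1
        refine Finset.sum_congr rfl fun i _ => ?_
        ring
    _ = 1 - (1 - x ^ 2) ^ b := by
        have hc2 : ∑ i ∈ range b, (-1:ℝ)^(i+1) * ((2*b).choose (b+1+i) : ℝ) * tt x (i+1)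
            = ((4 - 4*x^2)^b - ((2*b).choose b : ℝ))/2 := by
          have := F2 x b
          linarith
        rw [hc1, hc2, hK]
        have h4 : ((4:ℝ)^b) ≠ 0 := by positivity
        have hm : (4 - 4*x^2)^b = 4^b * (1-x^2)^b := by
          rw [← mul_pow]
          congr 1
          ring
        rw [hm]
        field_simp
        ring
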